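/- Let P be a sub-probability measure on a finite set X, let k ≥ 1 and ε > 0, and let q = max_{x∈X} P(x). Then the proportion of maps f : X → {1,…,k} such that P(f⁻¹(j)) ≤ (1+ε)/k for all j ∈ {1,…,k} is at least 1 − k·exp(−(ε/(2kq))·ln(1+ε)). -/

import Mathlib

open Finset Real Filter

def IsPMF {α : Type*} [Fintype α] (p : α → ℝ) : Prop :=
  (∀ x, 0 ≤ p x) ∧ ∑ x, p x = 1

noncomputable def inf' {α : Type*} (p : α → ℝ) (x : α) : ℝ := -Real.log (p x)

noncomputable def ent {α : Type*} [Fintype α] (p : α → ℝ) : ℝ :=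
  ∑ x, p x * inf' p x

noncomputable def Mfl {α : Type*} [Fintype α] (p : α → ℝ) (a : ℝ) : ℝ :=
  ∑ x, p x * |inf' p x - a|

noncomputable def Mpl {α : Type*} [Fintype α] (p : α → ℝ) (a : ℝ) : ℝ :=
  ∑ x, p x * max (inf' p x - a) 0

noncomputable def Mmi {α : Type*} [Fintype α] (p : α → ℝ) (a : ℝ) : ℝ :=
  ∑ x, p x * max (a - inf' p x) 0

open Classical in
noncomputable def dist' {Ω α : Type*} [Fintype Ω] (μ : Ω → ℝ) (X : Ω → α) : α → ℝ :=
  fun a => ∑ ω, if X ω = a then μ ω else 0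

noncomputable def entRV {Ω α : Type*} [Fintype Ω] [Fintype α] (μ : Ω → ℝ) (X : Ω → α) : ℝ :=
  ent (dist' μ X)

noncomputable def MRV {Ω α : Type*} [Fintype Ω] [Fintype α] (μ : Ω → ℝ) (X : Ω → α) : ℝ :=
  Mfl (dist' μ X) (entRV μ X)

noncomputable def infCond {Ω α β : Type*} [Fintype Ω] (μ : Ω → ℝ) (X : Ω → α) (Y : Ω → β) (ω : Ω) : ℝ :=
  inf' (dist' μ (fun ω => (X ω, Y ω))) (X ω, Y ω) - inf' (dist' μ Y) (Y ω)

noncomputable def entCond {Ω α β : Type*} [Fintype Ω] (μ : Ω → ℝ) (X : Ω → α) (Y : Ω → β) : ℝ :=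
  ∑ ω, μ ω * infCond μ X Y ω

noncomputable def MCond {Ω α β : Type*} [Fintype Ω] (μ : Ω → ℝ) (X : Ω → α) (Y : Ω → β) : ℝ :=
  ∑ ω, μ ω * |infCond μ X Y ω - entCond μ X Y|

open Classical in
noncomputable def propOf {γ : Type*} [Fintype γ] (P : γ → Prop) : ℝ :=
  ((Finset.univ.filter P).card : ℝ) / (Fintype.card γ : ℝ)

open Classical in
noncomputable def suppCard {α : Type*} [Fintype α] (p : α → ℝ) : ℕ :=
  (Finset.univ.filter (fun x => p x ≠ 0)).card

section Aux

open Finset Real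

lemma key_ineq {x : ℝ} (hx : 0 ≤ x) : 2 * x ≤ (2 + x) * Real.log (1 + x) := by
  set g : ℝ → ℝ := fun y => (2 + y) * Real.log (1 + y) - 2 * y with hg
  have hderiv : ∀ y : ℝ, 0 < 1 + y →
      HasDerivAt g (Real.log (1 + y) + (2 + y) * (1 / (1 + y)) - 2) y := by
    intro y hy
    have h1 : HasDerivAt (fun z : ℝ => 1 + z) 1 y := by
      simpa using (hasDerivAt_id y).const_add (1 : ℝ)
    have h2 : HasDerivAt (fun z : ℝ => Real.log (1 + z)) (1 / (1 + y)) y := by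
      simpa using h1.log hy.ne'
    have h3 : HasDerivAt (fun z : ℝ => 2 + z) 1 y := by
      simpa using (hasDerivAt_id y).const_add (2 : ℝ)
    have h4 := h3.mul h2
    have h5 : HasDerivAt (fun z : ℝ => 2 * z) 2 y := by
      simpa using (hasDerivAt_id y).const_mul (2 : ℝ)
    exact (h4.sub h5).congr_deriv (by ring)
  have hmono : MonotoneOn g (Set.Ici (0 : ℝ)) := by
    apply monotoneOn_of_deriv_nonneg (convex_Ici 0)
    · intro y hy
      have hy' : (0 : ℝ) < 1 + y := by
        simp only [Set.mem_Ici] at hy; linarith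
      exact ((hderiv y hy').continuousAt).continuousWithinAt
    · intro y hy
      have hy' : (0 : ℝ) < 1 + y := by
        simp only [interior_Ici, Set.mem_Ioi] at hy; linarith
      exact ((hderiv y hy').differentiableAt).differentiableWithinAt
    · intro y hy
      simp only [interior_Ici, Set.mem_Ioi] at hy
      have hy' : (0 : ℝ) < 1 + y := by linarith
      rw [(hderiv y hy').deriv]
      have hlog : 1 - (1 + y)⁻¹ ≤ Real.log (1 + y) :=
        Real.one_sub_inv_le_log_of_pos hy'
      have h6 : (2 + y) * (1 / (1 + y)) = 1 + (1 + y)⁻¹ := by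
        field_simp; ring
      rw [h6]
      linarith
  have h0 : g 0 = 0 := by simp [hg]
  have := hmono (Set.mem_Ici.mpr le_rfl) (Set.mem_Ici.mpr hx) hx
  rw [h0] at this
  simp only [hg] at this
  linarith

open Classical in
lemma bad_bound {X : Type*} [Fintype X] (P : X → ℝ) (hP0 : ∀ x, 0 ≤ P x)
    (hPsub : ∑ x, P x ≤ 1) (k : ℕ) (hk : 1 ≤ k) (ε : ℝ) (hε : 0 < ε)
    (q : ℝ) (hq0 : 0 < q) (hqP : ∀ x, P x ≤ q) (j : Fin k) :
    ((Finset.univ.filter (fun f : X → Fin k =>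
        (1 + ε) / k < ∑ x ∈ Finset.univ.filter (fun x => f x = j), P x)).card : ℝ)
      ≤ (k : ℝ) ^ (Fintype.card X) *
        Real.exp (ε / (k * q) - (1 + ε) / (k * q) * Real.log (1 + ε)) := by
  have hkR : (0 : ℝ) < k := by exact_mod_cast hk
  set L : ℝ := Real.log (1 + ε) with hL
  have hLpos : 0 < L := Real.log_pos (by linarith)
  set t : ℝ := L / q with ht
  have htpos : 0 < t := div_pos hLpos hq0
  have htq : t * q = L := div_mul_cancel₀ _ hq0.ne'
  set a : ℝ := (1 + ε) / k with ha
  set S : (X → Fin k) → ℝ := fun f => ∑ x ∈ Finset.univ.filter (fun x => f x = j), P x with hS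
  -- step 1
  have step1 : ((Finset.univ.filter (fun f : X → Fin k => a < S f)).card : ℝ)
      ≤ ∑ f : X → Fin k, Real.exp (t * (S f - a)) := by
    rw [Finset.card_eq_sum_ones, Nat.cast_sum]
    refine le_trans (Finset.sum_le_sum (fun f hf => ?_))
      (Finset.sum_le_sum_of_subset_of_nonneg (Finset.filter_subset _ _)
        (fun f _ _ => (Real.exp_pos _).le))
    have hfa : a < S f := (Finset.mem_filter.mp hf).2
    have : (0 : ℝ) ≤ t * (S f - a) := mul_nonneg htpos.le (by linarith)
    simpa using Real.one_le_exp this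
  -- rewrite sum as product
  have step2 : ∑ f : X → Fin k, Real.exp (t * (S f - a))
      = Real.exp (-(t * a)) * ∏ x : X, ∑ v : Fin k,
          Real.exp (t * (if v = j then P x else 0)) := by
    have : ∀ f : X → Fin k, Real.exp (t * (S f - a))
        = Real.exp (-(t * a)) * ∏ x : X, Real.exp (t * (if f x = j then P x else 0)) := by
      intro f
      rw [← Real.exp_sum, ← Real.exp_add]
      congr 1
      have hSf : S f = ∑ x : X, if f x = j then P x else 0 := Finset.sum_filter _ _
      rw [show t * (S f - a) = t * S f - t * a by ring, hSf, Finset.mul_sum]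
      ring
    rw [Finset.sum_congr rfl (fun f _ => this f), ← Finset.mul_sum]
    congr 1
    exact (Fintype.prod_sum (fun x v => Real.exp (t * (if v = j then P x else 0)))).symm
  -- per-factor bound
  have factor_bound : ∀ x : X, ∑ v : Fin k, Real.exp (t * (if v = j then P x else 0))
      ≤ (k : ℝ) * Real.exp (ε * P x / (k * q)) := by
    intro x
    have hsum : ∑ v : Fin k, Real.exp (t * (if v = j then P x else 0))
        = Real.exp (t * P x) - 1 + (k : ℝ) := by
      have h1 : ∀ v : Fin k, Real.exp (t * (if v = j then P x else 0))
          = (if v = j then Real.exp (t * P x) - 1 else 0) + 1 := by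
        intro v; split <;> simp
      rw [Finset.sum_congr rfl (fun v _ => h1 v), Finset.sum_add_distrib,
        Finset.sum_ite_eq' Finset.univ j (fun _ => Real.exp (t * P x) - 1)]
      simp
    rw [hsum]
    -- exp(t * P x) ≤ 1 + ε * P x / q by convexity
    have hr0 : 0 ≤ P x / q := div_nonneg (hP0 x) hq0.le
    have hr1 : P x / q ≤ 1 := (div_le_one hq0).mpr (hqP x)
    have hconv := convexOn_exp.2 (Set.mem_univ (0 : ℝ)) (Set.mem_univ (t * q))
      (by linarith : (0:ℝ) ≤ 1 - P x / q) hr0 (by ring)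
    simp only [smul_eq_mul] at hconv
    have harg : (1 - P x / q) * 0 + (P x / q) * (t * q) = t * P x := by
      field_simp; ring
    rw [harg] at hconv
    have hexp_tq : Real.exp (t * q) = 1 + ε := by
      rw [htq, hL, Real.exp_log (by linarith)]
    rw [Real.exp_zero, hexp_tq] at hconv
    have hconv' : Real.exp (t * P x) ≤ 1 + ε * P x / q := by
      have : (1 - P x / q) * 1 + P x / q * (1 + ε) = 1 + ε * P x / q := by ring
      linarith [hconv, this.le]
    -- k + ε P x / q ≤ k * exp (ε P x / (k q))
    have hbern : 1 + ε * P x / (k * q) ≤ Real.exp (ε * P x / (k * q)) := by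
      linarith [Real.add_one_le_exp (ε * P x / (k * q))]
    have hrw : (k : ℝ) * (1 + ε * P x / (k * q)) = k + ε * P x / q := by
      field_simp
    nlinarith [mul_le_mul_of_nonneg_left hbern hkR.le]
  -- combine
  have prod_bound : ∏ x : X, ∑ v : Fin k, Real.exp (t * (if v = j then P x else 0))
      ≤ (k : ℝ) ^ (Fintype.card X) * Real.exp (ε / (k * q)) := by
    calc ∏ x : X, ∑ v : Fin k, Real.exp (t * (if v = j then P x else 0))
        ≤ ∏ x : X, (k : ℝ) * Real.exp (ε * P x / (k * q)) := by
          refine Finset.prod_le_prod (fun x _ => Finset.sum_nonneg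
            (fun v _ => (Real.exp_pos _).le)) (fun x _ => factor_bound x)
      _ = (k : ℝ) ^ (Fintype.card X) * Real.exp (∑ x : X, ε * P x / (k * q)) := by
          rw [Finset.prod_mul_distrib, Finset.prod_const, Real.exp_sum, Finset.card_univ]
      _ ≤ (k : ℝ) ^ (Fintype.card X) * Real.exp (ε / (k * q)) := by
          apply mul_le_mul_of_nonneg_left _ (by positivity)
          apply Real.exp_le_exp.mpr
          have : ∑ x : X, ε * P x / (k * q) = (ε / (k * q)) * ∑ x : X, P x := by
            rw [Finset.mul_sum]; congr 1; ext x; ring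
          rw [this]
          have hkq : (0:ℝ) < k * q := by positivity
          calc (ε / (k * q)) * ∑ x : X, P x ≤ (ε / (k * q)) * 1 :=
                mul_le_mul_of_nonneg_left hPsub (by positivity)
            _ = ε / (k * q) := mul_one _
  have final : ((Finset.univ.filter (fun f : X → Fin k => a < S f)).card : ℝ)
      ≤ (k : ℝ) ^ (Fintype.card X) * Real.exp (ε / (k * q) - (1 + ε) / (k * q) * L) := by
    calc ((Finset.univ.filter (fun f : X → Fin k => a < S f)).card : ℝ)
        ≤ ∑ f : X → Fin k, Real.exp (t * (S f - a)) := step1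
      _ = Real.exp (-(t * a)) * ∏ x : X, ∑ v : Fin k,
            Real.exp (t * (if v = j then P x else 0)) := step2
      _ ≤ Real.exp (-(t * a)) * ((k : ℝ) ^ (Fintype.card X) * Real.exp (ε / (k * q))) :=
          mul_le_mul_of_nonneg_left prod_bound (Real.exp_pos _).le
      _ = (k : ℝ) ^ (Fintype.card X) * Real.exp (ε / (k * q) - t * a) := by
          rw [show ε / (↑k * q) - t * a = -(t * a) + ε / (↑k * q) by ring, Real.exp_add]
          ring
      _ = (k : ℝ) ^ (Fintype.card X) * Real.exp (ε / (k * q) - (1 + ε) / (k * q) * L) := by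
          congr 2
          rw [ht, ha]
          field_simp
  exact final

end Aux

open Classical in
theorem stmt12 {X : Type*} [Fintype X] [Nonempty X] (P : X → ℝ)
    (hP0 : ∀ x, 0 ≤ P x) (hPsub : ∑ x, P x ≤ 1)
    (k : ℕ) (hk : 1 ≤ k) (ε : ℝ) (hε : 0 < ε)
    (q : ℝ) (hq : q = Finset.univ.sup' Finset.univ_nonempty P) :
    1 - k * Real.exp (-(ε / (2 * k * q)) * Real.log (1 + ε)) ≤
      propOf (fun f : X → Fin k =>
        ∀ j : Fin k, ∑ x ∈ Finset.univ.filter (fun x => f x = j), P x ≤ (1 + ε) / k) := by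
  classical
  have hkR : (0:ℝ) < k := by exact_mod_cast hk
  have hqP : ∀ x, P x ≤ q := by
    intro x; rw [hq]; exact Finset.le_sup' P (Finset.mem_univ x)
  have hq0 : 0 ≤ q := le_trans (hP0 (Classical.arbitrary X)) (hqP _)
  have hprop0 : 0 ≤ propOf (fun f : X → Fin k =>
      ∀ j : Fin k, ∑ x ∈ Finset.univ.filter (fun x => f x = j), P x ≤ (1 + ε) / k) := by
    unfold propOf; positivity
  rcases eq_or_lt_of_le hq0 with hq0' | hqpos
  · -- q = 0 : LHS ≤ 0
    have : ε / (2 * k * q) = 0 := by rw [← hq0', mul_zero, div_zero]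
    rw [this]
    simp only [neg_zero, zero_mul, Real.exp_zero, mul_one]
    have : (1:ℝ) ≤ k := by exact_mod_cast hk
    linarith
  · -- main case
    have hkq : (0:ℝ) < (k:ℝ) * q := by positivity
    set L : ℝ := Real.log (1 + ε) with hL
    have hLpos : 0 < L := Real.log_pos (by linarith)
    set B : ℝ := Real.exp (ε / (k * q) - (1 + ε) / (k * q) * L) with hB
    set B' : ℝ := Real.exp (-(ε / (2 * k * q)) * L) with hB'
    have hBB' : B ≤ B' := by
      rw [hB, hB']
      apply Real.exp_le_exp.mpr
      have hkey : 2 * ε ≤ (2 + ε) * L := key_ineq hε.le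
      have h1 : ε / (↑k * q) - (1 + ε) / (↑k * q) * L
          = (ε - (1 + ε) * L) * ((↑k : ℝ) * q)⁻¹ := by ring
      have h2 : -(ε / (2 * ↑k * q)) * L = (-(ε * L / 2)) * ((↑k : ℝ) * q)⁻¹ := by
        rw [div_eq_mul_inv, div_eq_mul_inv]
        rw [show (2 * (↑k : ℝ) * q) = 2 * ((↑k:ℝ) * q) by ring, mul_inv]
        ring
      rw [h1, h2]
      apply mul_le_mul_of_nonneg_right _ (inv_nonneg.mpr hkq.le)
      linarith
    set N : ℝ := ((k : ℝ) ^ (Fintype.card X)) with hN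
    have hNcard : (Fintype.card (X → Fin k) : ℝ) = N := by
      rw [Fintype.card_fun, Fintype.card_fin]
      push_cast
      rfl
    have hNpos : 0 < N := by positivity
    set p : (X → Fin k) → Prop := fun f =>
      ∀ j : Fin k, ∑ x ∈ Finset.univ.filter (fun x => f x = j), P x ≤ (1 + ε) / k with hp
    have hsplit : ((Finset.univ.filter p).card : ℝ)
        + ((Finset.univ.filter (fun f => ¬ p f)).card : ℝ)
        = (Fintype.card (X → Fin k) : ℝ) := by
      rw [← Nat.cast_add, Finset.card_filter_add_card_filter_not]
      rfl
    have hbad : ((Finset.univ.filter (fun f => ¬ p f)).card : ℝ) ≤ (k : ℝ) * (N * B) := by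
      have hsub : (Finset.univ.filter (fun f => ¬ p f))
          ⊆ Finset.univ.biUnion (fun j : Fin k => Finset.univ.filter (fun f : X → Fin k =>
              (1 + ε) / k < ∑ x ∈ Finset.univ.filter (fun x => f x = j), P x)) := by
        intro f hf
        simp only [Finset.mem_filter, hp, not_forall, not_le] at hf
        obtain ⟨-, j, hj⟩ := hf
        exact Finset.mem_biUnion.mpr ⟨j, Finset.mem_univ j, Finset.mem_filter.mpr
          ⟨Finset.mem_univ f, hj⟩⟩
      calc ((Finset.univ.filter (fun f => ¬ p f)).card : ℝ)
          ≤ ((Finset.univ.biUnion (fun j : Fin k => Finset.univ.filter (fun f : X → Fin k =>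
              (1 + ε) / k < ∑ x ∈ Finset.univ.filter (fun x => f x = j), P x))).card : ℝ) := by
            exact_mod_cast Finset.card_le_card hsub
        _ ≤ ∑ j : Fin k, ((Finset.univ.filter (fun f : X → Fin k =>
              (1 + ε) / k < ∑ x ∈ Finset.univ.filter (fun x => f x = j), P x)).card : ℝ) := by
            exact_mod_cast Finset.card_biUnion_le
        _ ≤ ∑ _j : Fin k, N * B := by
            apply Finset.sum_le_sum
            intro j _
            exact bad_bound P hP0 hPsub k hk ε hε q hqpos hqP j
        _ = (k : ℝ) * (N * B) := by
            rw [Finset.sum_const, Finset.card_univ, Fintype.card_fin, nsmul_eq_mul]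
    have hgoal : 1 - (k : ℝ) * B' ≤ ((Finset.univ.filter p).card : ℝ)
        / (Fintype.card (X → Fin k) : ℝ) := by
      rw [hNcard, le_div_iff₀ hNpos]
      have hkNB : (k : ℝ) * (N * B) ≤ (k : ℝ) * (N * B') := by
        apply mul_le_mul_of_nonneg_left _ hkR.le
        exact mul_le_mul_of_nonneg_left hBB' hNpos.le
      rw [hNcard] at hsplit
      nlinarith [hsplit, hbad, hkNB]
    unfold propOf
    convert hgoal using 5
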